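/- Let E be a real topological vector space equipped with a biorthogonal system (e_n)_{n≥1}, (e*_n)_{n≥1}, where (e_n)_{n≥1} is linearly independent. Let X ⊆ E be a non-empty convex subset, let x* ∈ X, and suppose X is qualified at x*. Let f : X → ℝ ∪ {+∞} be a convex function with non-empty domain which is pseudo-semicontinuous on X with respect to x* and which is differentiable at x* in each direction e_n, n ≥ 1. Then f(x*) = inf_{x ∈ X} f(x) if and only if f'(x*; e_n) = 0 for all n ≥ 1. -/

import Mathlib

open Filter Topology

/-- The canonical finite-rank projections `P^k x = ∑_{n<k} ⟨e*_n, x⟩ e_n` associated with a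
biorthogonal system `(e_n), (e*_n)`. -/
noncomputable def proj {E : Type*} [AddCommGroup E] [Module ℝ E] [TopologicalSpace E]
    (e : ℕ → E) (estar : ℕ → E →L[ℝ] ℝ) (k : ℕ) (x : E) : E :=
  ∑ n ∈ Finset.range k, estar n x • e n

section aux
variable {E : Type*} [AddCommGroup E] [Module ℝ E] [TopologicalSpace E]
  (e : ℕ → E) (estar : ℕ → E →L[ℝ] ℝ)

lemma proj_sub (k : ℕ) (x y : E) :
    proj e estar k (x - y) = proj e estar k x - proj e estar k y := by
  simp [proj, sub_smul, Finset.sum_sub_distrib]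

lemma proj_add (k : ℕ) (x y : E) :
    proj e estar k (x + y) = proj e estar k x + proj e estar k y := by
  simp [proj, add_smul, Finset.sum_add_distrib]

lemma proj_smul (k : ℕ) (s : ℝ) (x : E) :
    proj e estar k (s • x) = s • proj e estar k x := by
  simp [proj, Finset.smul_sum, smul_smul]

lemma proj_basis (hbo1 : ∀ n, estar n (e n) = 1)
    (hbo2 : ∀ n m, n ≠ m → estar n (e m) = 0) {n k : ℕ} (h : n < k) :
    proj e estar k (e n) = e n := by
  rw [proj, Finset.sum_eq_single n]
  · rw [hbo1]; simp
  · intro m _ hm; rw [hbo2 m n hm]; simp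
  · intro hn; exact absurd (Finset.mem_range.2 h) hn

/-- extract a real value from an EReal bounded above, not ⊥ -/
lemma ereal_exists {x : EReal} {g : ℝ} (hb : x ≠ ⊥) (hg : x ≤ (g : ℝ)) :
    ∃ r : ℝ, x = (r : EReal) ∧ r ≤ g := by
  have ht : x ≠ ⊤ := ne_top_of_le_ne_top (EReal.coe_ne_top g) hg
  refine ⟨x.toReal, (EReal.coe_toReal ht hb).symm, ?_⟩
  rw [← EReal.coe_le_coe_iff, EReal.coe_toReal ht hb]; exact hg

lemma ereal_sub_nonneg {a : EReal} {r : ℝ} (h : (r : EReal) ≤ a) : 0 ≤ a - (r : EReal) := by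
  induction a using EReal.rec with
  | bot => simp at h
  | coe s =>
    rw [← EReal.coe_sub]
    have : r ≤ s := EReal.coe_le_coe_iff.1 h
    exact_mod_cast sub_nonneg.2 this
  | top => rw [EReal.top_sub_coe]; exact le_top

/-- finite Jensen inequality for the EReal-valued convex `f` -/
lemma jensen_aux {X : Set E} (hXconv : Convex ℝ X) {f : E → EReal}
    (hfbot : ∀ x ∈ X, f x ≠ ⊥)
    (hconv : ∀ x ∈ X, ∀ y ∈ X, ∀ a b : ℝ, 0 ≤ a → 0 ≤ b → a + b = 1 →
      f (a • x + b • y) ≤ (a : EReal) * f x + (b : EReal) * f y) :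
    ∀ m : ℕ, ∀ p : Fin m → E, ∀ w g : Fin m → ℝ,
      (∀ i, p i ∈ X) → (∀ i, 0 ≤ w i) → (∑ i, w i) = 1 →
      (∀ i, f (p i) ≤ ((g i : ℝ) : EReal)) →
      f (∑ i, w i • p i) ≤ ((∑ i, w i * g i : ℝ) : EReal) := by
  intro m
  induction m with
  | zero =>
    intro p w g _ _ hsum _
    simp at hsum
  | succ m ih =>
    intro p w g hp hw hsum hg
    set a := w (Fin.last m) with ha
    have hsum' : ∑ i : Fin m, w i.castSucc = 1 - a := by
      rw [Fin.sum_univ_castSucc] at hsum; linarith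
    have ha1 : a ≤ 1 := by
      have : (0:ℝ) ≤ ∑ i : Fin m, w i.castSucc :=
        Finset.sum_nonneg fun i _ => hw _
      linarith
    rcases eq_or_lt_of_le ha1 with haeq | halt
    · -- a = 1 : all other weights vanish
      have hz : ∀ i : Fin m, w i.castSucc = 0 := by
        have h0 : ∑ i : Fin m, w i.castSucc = 0 := by rw [hsum', ← haeq]; ring
        intro i
        exact (Finset.sum_eq_zero_iff_of_nonneg (fun i _ => hw _)).1 h0 i (Finset.mem_univ i)
      have hpt : ∑ i, w i • p i = p (Fin.last m) := by
        rw [Fin.sum_univ_castSucc]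
        have : ∑ i : Fin m, w i.castSucc • p i.castSucc = 0 := by
          apply Finset.sum_eq_zero; intro i _; rw [hz i, zero_smul]
        rw [this, ← ha, haeq, one_smul, zero_add]
      have hgt : ∑ i, w i * g i = g (Fin.last m) := by
        rw [Fin.sum_univ_castSucc]
        have : ∑ i : Fin m, w i.castSucc * g i.castSucc = 0 := by
          apply Finset.sum_eq_zero; intro i _; rw [hz i, zero_mul]
        rw [this, ← ha, haeq, one_mul, zero_add]
      rw [hpt, hgt]; exact hg _
    · -- a < 1 : peel off the last point
      have h1a : (0:ℝ) < 1 - a := by linarith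
      set w' : Fin m → ℝ := fun i => w i.castSucc / (1 - a) with hw'
      have hw'nonneg : ∀ i, 0 ≤ w' i := fun i => div_nonneg (hw _) h1a.le
      have hw'sum : ∑ i, w' i = 1 := by
        rw [hw']; rw [← Finset.sum_div, hsum', div_self h1a.ne']
      set q := ∑ i : Fin m, w' i • p i.castSucc with hq
      have hqX : q ∈ X := hXconv.sum_mem (fun i _ => hw'nonneg i)
        hw'sum (fun i _ => hp _)
      have hfq := ih (fun i => p i.castSucc) w' (fun i => g i.castSucc)
        (fun i => hp _) hw'nonneg hw'sum (fun i => hg _)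
      obtain ⟨rq, hrq, hrqle⟩ := ereal_exists (hfbot q hqX) hfq
      obtain ⟨rl, hrl, hrlle⟩ := ereal_exists (hfbot _ (hp (Fin.last m))) (hg (Fin.last m))
      have hdecomp : ∑ i, w i • p i = (1 - a) • q + a • p (Fin.last m) := by
        rw [Fin.sum_univ_castSucc, hq, Finset.smul_sum, ← ha]
        congr 1
        apply Finset.sum_congr rfl
        intro i _
        rw [smul_smul, hw']
        congr 1
        field_simp
      have hmain := hconv q hqX (p (Fin.last m)) (hp (Fin.last m)) (1 - a) a
        h1a.le (hw _) (by ring)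
      rw [hdecomp]
      refine le_trans hmain ?_
      rw [hrq, hrl, ← EReal.coe_mul, ← EReal.coe_mul, ← EReal.coe_add,
        EReal.coe_le_coe_iff, Fin.sum_univ_castSucc]
      have h1 : ∑ i : Fin m, w i.castSucc * g i.castSucc = (1 - a) * ∑ i, w' i * g i.castSucc := by
        rw [Finset.mul_sum]
        apply Finset.sum_congr rfl
        intro i _
        rw [hw']; field_simp
      rw [h1, ← ha]
      have h2 : rq ≤ ∑ i, w' i * g i.castSucc := hrqle
      nlinarith [hw (Fin.last m)]
end aux

/-- **Theorem 1.** Let `E` be a real topological vector space with a biorthogonal system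
`(e_n), (e*_n)`, `(e_n)` linearly independent, `X ⊆ E` a nonempty convex set, `x* ∈ X`, and
suppose `X` is qualified at `x*`.  Let `f : X → ℝ ∪ {+∞}` be convex with nonempty domain,
pseudo-semicontinuous on `X` with respect to `x*`, and differentiable at `x*` in each
direction `e_n`.  Then `f(x*) = inf_X f` iff `f'(x*; e_n) = 0` for all `n`. -/
theorem statement0 {E : Type*} [AddCommGroup E] [Module ℝ E] [TopologicalSpace E]
    [IsTopologicalAddGroup E] [ContinuousSMul ℝ E]
    (e : ℕ → E) (estar : ℕ → E →L[ℝ] ℝ)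
    (hbo1 : ∀ n, estar n (e n) = 1)
    (hbo2 : ∀ n m, n ≠ m → estar n (e m) = 0)
    (hli : LinearIndependent ℝ e)
    (X : Set E) (hXne : X.Nonempty) (hXconv : Convex ℝ X)
    (xs : E) (hxs : xs ∈ X)
    -- `X` is qualified at `x*` : `P^k x*` is in the interior of `X^k` relative to `E^k`…
    (hqual1 : ∀ k : ℕ, ∃ U : Set E, IsOpen U ∧ proj e estar k xs ∈ U ∧
      U ∩ Set.range (proj e estar k) ⊆ proj e estar k '' X)
    -- …and `P^k (X - x*) ⊆ X - x*`.
    (hqual2 : ∀ k : ℕ, ∀ x ∈ X, xs + proj e estar k (x - xs) ∈ X)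
    -- `f : X → ℝ ∪ {+∞}` (it never takes the value `-∞` on `X`) with nonempty domain
    (f : E → EReal)
    (hfbot : ∀ x ∈ X, f x ≠ ⊥)
    (hdom : ∃ x ∈ X, f x ≠ ⊤)
    -- `f` is convex on `X`
    (hconv : ∀ x ∈ X, ∀ y ∈ X, ∀ a b : ℝ, 0 ≤ a → 0 ≤ b → a + b = 1 →
      f (a • x + b • y) ≤ (a : EReal) * f x + (b : EReal) * f y)
    -- `f` is pseudo-semicontinuous on `X` with respect to `x*`
    (hpsc : ∀ x ∈ X,
      Filter.limsup (fun k : ℕ => f (xs + proj e estar k (x - xs))) atTop ≤ f x)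
    -- `f` is differentiable at `x*` in each direction `e_n`
    (hdiff : ∀ n : ℕ, ∃ L : ℝ,
      Tendsto (fun t : ℝ => ((t⁻¹ : ℝ) : EReal) * (f (xs + t • e n) - f xs))
        (𝓝[≠] (0 : ℝ)) (𝓝 (L : EReal))) :
    f xs = ⨅ x ∈ X, f x ↔
      ∀ n : ℕ, Tendsto (fun t : ℝ => ((t⁻¹ : ℝ) : EReal) * (f (xs + t • e n) - f xs))
        (𝓝[≠] (0 : ℝ)) (𝓝 (0 : EReal)) := by
  -- small perturbations in direction `e n` stay in `X`
  have hmem : ∀ n : ℕ, ∃ δ : ℝ, 0 < δ ∧ ∀ s : ℝ, |s| < δ → xs + s • e n ∈ X := by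
    intro n
    obtain ⟨U, hU, hxsU, hsub⟩ := hqual1 (n + 1)
    have hc : Continuous (fun s : ℝ => proj e estar (n + 1) xs + s • e n) :=
      continuous_const.add (continuous_id.smul continuous_const)
    have hopen : IsOpen ((fun s : ℝ => proj e estar (n + 1) xs + s • e n) ⁻¹' U) :=
      hU.preimage hc
    have h0 : (0 : ℝ) ∈ ((fun s : ℝ => proj e estar (n + 1) xs + s • e n) ⁻¹' U) := by
      simpa using hxsU
    obtain ⟨δ, hδ, hball⟩ := Metric.isOpen_iff.1 hopen 0 h0
    refine ⟨δ, hδ, fun s hs => ?_⟩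
    have hsU : proj e estar (n + 1) xs + s • e n ∈ U := by
      apply hball
      simpa [Real.dist_eq] using hs
    have heq : proj e estar (n + 1) (xs + s • e n) = proj e estar (n + 1) xs + s • e n := by
      rw [proj_add, proj_smul, proj_basis e estar hbo1 hbo2 (Nat.lt_succ_self n)]
    obtain ⟨y, hy, hyeq⟩ := hsub ⟨hsU, ⟨xs + s • e n, heq⟩⟩
    have hmemX := hqual2 (n + 1) y hy
    rwa [proj_sub, hyeq, add_sub_cancel_left] at hmemX
  have hbotxs : f xs ≠ ⊥ := hfbot xs hxs
  constructor
  · -- forward direction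
    intro hmin n
    obtain ⟨L, hL⟩ := hdiff n
    have hlower : ∀ x ∈ X, f xs ≤ f x := fun x hx =>
      le_trans (le_of_eq hmin) (iInf₂_le x hx)
    have htopxs : f xs ≠ ⊤ := by
      obtain ⟨x0, hx0, hx0t⟩ := hdom
      intro h
      exact hx0t (top_le_iff.1 (h ▸ hlower x0 hx0))
    obtain ⟨r, hr⟩ : ∃ r : ℝ, f xs = (r : EReal) :=
      ⟨(f xs).toReal, (EReal.coe_toReal htopxs hbotxs).symm⟩
    obtain ⟨δ, hδ, hδmem⟩ := hmem n
    have hDnonneg : ∀ s : ℝ, |s| < δ → (0 : EReal) ≤ f (xs + s • e n) - f xs := by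
      intro s hs
      rw [hr]
      exact ereal_sub_nonneg (hr ▸ hlower _ (hδmem s hs))
    have hLnn : (0 : EReal) ≤ (L : EReal) := by
      have hmono : 𝓝[>] (0 : ℝ) ≤ 𝓝[≠] (0 : ℝ) := nhdsWithin_mono 0 fun t ht => ne_of_gt ht
      refine ge_of_tendsto (hL.mono_left hmono) ?_
      filter_upwards [Ioo_mem_nhdsGT_of_mem ⟨le_refl (0 : ℝ), hδ⟩] with t ht
      obtain ⟨ht0, htδ⟩ := ht
      apply mul_nonneg
      · exact EReal.coe_nonneg.2 (inv_nonneg.2 ht0.le)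
      · exact hDnonneg t (by rw [abs_of_pos ht0]; exact htδ)
    have hLnp : (L : EReal) ≤ (0 : EReal) := by
      have hmono : 𝓝[<] (0 : ℝ) ≤ 𝓝[≠] (0 : ℝ) := nhdsWithin_mono 0 fun t ht => ne_of_lt ht
      refine le_of_tendsto (hL.mono_left hmono) ?_
      filter_upwards [Ioo_mem_nhdsLT_of_mem ⟨neg_lt_zero.2 hδ, le_refl (0 : ℝ)⟩] with t ht
      obtain ⟨htδ, ht0⟩ := ht
      have h1 : (0 : EReal) ≤ ((-t⁻¹ : ℝ) : EReal) * (f (xs + t • e n) - f xs) := by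
        apply mul_nonneg
        · exact EReal.coe_nonneg.2 (by simp [inv_nonpos.2 ht0.le])
        · exact hDnonneg t (by rw [abs_of_neg ht0]; linarith)
      have h2 : ((t⁻¹ : ℝ) : EReal) * (f (xs + t • e n) - f xs)
          = -(((-t⁻¹ : ℝ) : EReal) * (f (xs + t • e n) - f xs)) := by
        rw [EReal.coe_neg, EReal.neg_mul, neg_neg]
      rw [h2]
      exact EReal.neg_le.2 (by rwa [neg_zero])
    have : (L : EReal) = 0 := le_antisymm hLnp hLnn
    exact this ▸ hL
  · -- backward direction
    intro hz
    have htopxs : f xs ≠ ⊤ := by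
      intro htop
      have hmono : 𝓝[>] (0 : ℝ) ≤ 𝓝[≠] (0 : ℝ) := nhdsWithin_mono 0 fun t ht => ne_of_gt ht
      have h1 : Tendsto (fun t : ℝ => ((t⁻¹ : ℝ) : EReal) * (f (xs + t • e 0) - f xs))
          (𝓝[>] (0 : ℝ)) (𝓝 0) := (hz 0).mono_left hmono
      have heq : (fun t : ℝ => ((t⁻¹ : ℝ) : EReal) * (f (xs + t • e 0) - f xs))
          =ᶠ[𝓝[>] (0 : ℝ)] (fun _ => (⊥ : EReal)) := by
        filter_upwards [self_mem_nhdsWithin] with t ht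
        rw [htop, EReal.sub_top, EReal.mul_bot_of_pos (EReal.coe_pos.2 (inv_pos.2 ht))]
      have h2 := Filter.Tendsto.congr' heq h1
      have h3 := tendsto_nhds_unique h2 tendsto_const_nhds
      simp at h3
    obtain ⟨r, hr⟩ : ∃ r : ℝ, f xs = (r : EReal) :=
      ⟨(f xs).toReal, (EReal.coe_toReal htopxs hbotxs).symm⟩
    -- combined smallness: membership + linear upper bound
    have hub : ∀ n : ℕ, ∀ ε : ℝ, 0 < ε → ∃ δ : ℝ, 0 < δ ∧ ∀ s : ℝ, |s| < δ →
        (xs + s • e n ∈ X ∧ f (xs + s • e n) ≤ ((r + ε * |s| : ℝ) : EReal)) := by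
      intro n ε hε
      obtain ⟨δ₁, hδ₁, hδ₁mem⟩ := hmem n
      have hIoo : Set.Ioo ((-ε : ℝ) : EReal) ((ε : ℝ) : EReal) ∈ 𝓝 (0 : EReal) :=
        Ioo_mem_nhds (by exact_mod_cast neg_lt_zero.2 hε) (by exact_mod_cast hε)
      have hev : ∀ᶠ t in 𝓝[≠] (0 : ℝ),
          ((t⁻¹ : ℝ) : EReal) * (f (xs + t • e n) - f xs)
            ∈ Set.Ioo ((-ε : ℝ) : EReal) ((ε : ℝ) : EReal) := hz n hIoo
      rw [eventually_nhdsWithin_iff, Metric.eventually_nhds_iff] at hev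
      obtain ⟨δ₂, hδ₂, hδ₂p⟩ := hev
      refine ⟨min δ₁ δ₂, lt_min hδ₁ hδ₂, fun s hs => ?_⟩
      have hs1 : |s| < δ₁ := lt_of_lt_of_le hs (min_le_left _ _)
      have hs2 : |s| < δ₂ := lt_of_lt_of_le hs (min_le_right _ _)
      have hX : xs + s • e n ∈ X := hδ₁mem s hs1
      refine ⟨hX, ?_⟩
      rcases eq_or_ne s 0 with rfl | hs0
      · simp [hr]
      · have hquot := hδ₂p (y := s) (by rw [Real.dist_eq, sub_zero]; exact hs2) hs0
        have hfb := hfbot _ hX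
        rcases eq_or_ne (f (xs + s • e n)) ⊤ with htop' | hne
        · exfalso
          rw [htop', hr, EReal.top_sub_coe] at hquot
          rcases lt_or_gt_of_ne hs0 with hneg | hpos
          · rw [EReal.coe_mul_top_of_neg (inv_lt_zero.2 hneg)] at hquot
            exact absurd hquot.1 (by simp)
          · rw [EReal.coe_mul_top_of_pos (inv_pos.2 hpos)] at hquot
            exact absurd hquot.2 (by simp)
        · obtain ⟨b, hb⟩ : ∃ b : ℝ, f (xs + s • e n) = (b : EReal) :=
            ⟨_, (EReal.coe_toReal hne hfb).symm⟩
          rw [hb, hr, ← EReal.coe_sub, ← EReal.coe_mul] at hquot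
          obtain ⟨hl, hu⟩ := hquot
          rw [EReal.coe_lt_coe_iff] at hl hu
          rw [hb, EReal.coe_le_coe_iff]
          rcases lt_or_gt_of_ne hs0 with hneg | hpos
          · have h1 := mul_lt_mul_of_neg_left hl hneg
            rw [← mul_assoc, mul_inv_cancel₀ hneg.ne, one_mul] at h1
            rw [abs_of_neg hneg]
            nlinarith
          · have h1 := mul_lt_mul_of_pos_left hu hpos
            rw [← mul_assoc, mul_inv_cancel₀ hpos.ne', one_mul] at h1
            rw [abs_of_pos hpos]
            nlinarith
    have hkey : ∀ x ∈ X, f xs ≤ f x := by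
      intro x hx
      have hk : ∀ k : ℕ, f xs ≤ f (xs + proj e estar k (x - xs)) := by
        intro k
        by_contra hltc
        push_neg at hltc
        set x' := xs + proj e estar k (x - xs) with hx'def
        have hx'X : x' ∈ X := hqual2 k x hx
        rcases Nat.eq_zero_or_pos k with rfl | hk0
        · rw [hx'def] at hltc
          simp [proj] at hltc
        obtain ⟨r', hr', hr'lt⟩ : ∃ r' : ℝ, f x' = (r' : EReal) ∧ r' < r := by
          have hb := hfbot x' hx'X
          have hne : f x' ≠ ⊤ := by
            intro h
            rw [h, hr] at hltc
            exact absurd hltc (by simp)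
          refine ⟨(f x').toReal, (EReal.coe_toReal hne hb).symm, ?_⟩
          rw [hr, ← EReal.coe_toReal hne hb, EReal.coe_lt_coe_iff] at hltc
          exact hltc
        set c : ℕ → ℝ := fun n => estar n (x - xs) with hcdef
        set S : ℝ := ∑ n ∈ Finset.range k, |c n| with hSdef
        have hS0 : 0 ≤ S := Finset.sum_nonneg fun n _ => abs_nonneg _
        set ε : ℝ := (r - r') / (2 * (S + 1)) with hεdef
        have hεpos : 0 < ε := div_pos (by linarith) (by linarith)
        choose δ hδpos hδprop using fun i : Fin k => hub i ε hεpos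
        have hFin : Nonempty (Fin k) := ⟨⟨0, hk0⟩⟩
        have hne' : (Finset.univ : Finset (Fin k)).Nonempty := Finset.univ_nonempty
        set d : ℝ := Finset.univ.inf' hne' δ with hddef
        have hdpos : 0 < d := (Finset.lt_inf'_iff hne').2 fun i _ => hδpos i
        set t : ℝ := min 1 (d / (S + 1)) with htdef
        have ht0 : 0 < t := lt_min one_pos (div_pos hdpos (by linarith))
        have ht1 : t ≤ 1 := min_le_left _ _
        have htc : ∀ i : Fin k, |t * c i| < δ i := by
          intro i
          have h1 : |c i| ≤ S :=
            Finset.single_le_sum (f := fun n => |c n|) (fun n _ => abs_nonneg _)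
              (Finset.mem_range.2 i.2)
          have h2 : t ≤ d / (S + 1) := min_le_right _ _
          have h3 : d ≤ δ i := Finset.inf'_le _ (Finset.mem_univ i)
          rw [abs_mul, abs_of_pos ht0]
          calc t * |c i| ≤ (d / (S + 1)) * S := by
                apply mul_le_mul h2 h1 (abs_nonneg _) (by positivity)
            _ < d := by
                rw [div_mul_eq_mul_div, div_lt_iff₀ (by linarith)]
                nlinarith
            _ ≤ δ i := h3
        set v : E := proj e estar k (x - xs) with hvdef
        have hveq : v = ∑ n ∈ Finset.range k, c n • e n := rfl
        set p : Fin (k + 1) → E :=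
          Fin.lastCases (xs + t • v) (fun j : Fin k => xs + (-(t * c j)) • e j) with hpdef
        set g : Fin (k + 1) → ℝ :=
          Fin.lastCases ((1 - t) * r + t * r') (fun j : Fin k => r + ε * (t * |c j|)) with hgdef
        set w : Fin (k + 1) → ℝ := fun _ => 1 / (k + 1 : ℝ) with hwdef
        have hwpos : ∀ i, 0 ≤ w i := fun _ => by positivity
        have hk1pos : (0 : ℝ) < (k : ℝ) + 1 := by positivity
        have hsumw : ∑ i, w i = 1 := by
          rw [hwdef, Finset.sum_const, Finset.card_univ, Fintype.card_fin]
          rw [nsmul_eq_mul, Nat.cast_add, Nat.cast_one]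
          field_simp
        have hxtv : xs + t • v = (1 - t) • xs + t • x' := by
          rw [hx'def, smul_add, sub_smul, one_smul]
          abel
        have hpX : ∀ i, p i ∈ X := by
          intro i
          induction i using Fin.lastCases with
          | last =>
            rw [hpdef]
            simp only [Fin.lastCases_last]
            rw [hxtv]
            exact hXconv hxs hx'X (by linarith) ht0.le (by ring)
          | cast j =>
            rw [hpdef]
            simp only [Fin.lastCases_castSucc]
            exact (hδprop j (-(t * c j)) (by rw [abs_neg]; exact htc j)).1
        have hgle : ∀ i, f (p i) ≤ ((g i : ℝ) : EReal) := by
          intro i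
          induction i using Fin.lastCases with
          | last =>
            rw [hpdef, hgdef]
            simp only [Fin.lastCases_last]
            rw [hxtv]
            refine le_trans (hconv xs hxs x' hx'X (1 - t) t (by linarith) ht0.le (by ring)) ?_
            rw [hr, hr', ← EReal.coe_mul, ← EReal.coe_mul, ← EReal.coe_add]
          | cast j =>
            rw [hpdef, hgdef]
            simp only [Fin.lastCases_castSucc]
            have h5 := (hδprop j (-(t * c j)) (by rw [abs_neg]; exact htc j)).2
            rwa [abs_neg, abs_mul, abs_of_pos ht0] at h5
        have hbary : ∑ i, w i • p i = xs := by
          have h1 : ∑ i, w i • p i = (1 / (k + 1 : ℝ)) • ∑ i, p i := by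
            rw [Finset.smul_sum]
          have h3b : ∑ j : Fin k, (-(t * c (j : ℕ))) • e (j : ℕ) = -(t • v) := by
            have h4 : ∑ j : Fin k, (-(t * c (j : ℕ))) • e (j : ℕ)
                = ∑ n ∈ Finset.range k, (-(t * c n)) • e n :=
              Fin.sum_univ_eq_sum_range (fun n => (-(t * c n)) • e n) k
            rw [h4, hveq, Finset.smul_sum, ← Finset.sum_neg_distrib]
            apply Finset.sum_congr rfl
            intro n _
            simp [neg_smul, smul_smul]
          have h2 : ∑ i : Fin (k + 1), p i = ((k : ℝ) + 1) • xs := by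
            rw [Fin.sum_univ_castSucc, hpdef]
            simp only [Fin.lastCases_castSucc, Fin.lastCases_last]
            rw [Finset.sum_add_distrib, h3b, Finset.sum_const, Finset.card_univ,
              Fintype.card_fin, ← Nat.cast_smul_eq_nsmul ℝ, add_smul, one_smul]
            abel
          rw [h1, h2, smul_smul]
          rw [one_div, inv_mul_cancel₀ (by positivity), one_smul]
        have hjen := jensen_aux hXconv hfbot hconv (k + 1) p w g hpX hwpos hsumw hgle
        rw [hbary, hr, EReal.coe_le_coe_iff] at hjen
        have hsumg : ∑ i, w i * g i
            = (1 / (k + 1 : ℝ)) * (((k : ℝ) * r + ε * t * S) + ((1 - t) * r + t * r')) := by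
          rw [← Finset.mul_sum, Fin.sum_univ_castSucc, hgdef]
          simp only [Fin.lastCases_castSucc, Fin.lastCases_last]
          congr 2
          rw [Finset.sum_add_distrib, Finset.sum_const, Finset.card_univ, Fintype.card_fin]
          have h6 : ∑ j : Fin k, ε * (t * |c (j : ℕ)|)
              = ∑ n ∈ Finset.range k, ε * (t * |c n|) :=
            Fin.sum_univ_eq_sum_range (fun n => ε * (t * |c n|)) k
          rw [h6, ← Finset.mul_sum, ← Finset.mul_sum, ← hSdef]
          push_cast
          ring
        rw [hsumg, one_div, inv_mul_eq_div, le_div_iff₀ hk1pos] at hjen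
        have hkey2 : r ≤ r' + ε * S := by nlinarith
        have hεeq : ε * (2 * (S + 1)) = r - r' := by
          rw [hεdef]
          field_simp
        nlinarith
      calc f xs ≤ limsup (fun k : ℕ => f (xs + proj e estar k (x - xs))) atTop := by
            apply le_limsup_of_frequently_le (Frequently.of_forall hk)
        _ ≤ f x := hpsc x hx
    exact le_antisymm (le_iInf₂ hkey) (iInf₂_le xs hxs)
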